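/- If the string equation holds, then for every x and every k ∈ {1,…,n+1}: a_k·[ r′/w_k − r·w_k′/w_k² + ū′ + Σ_l ā_l·(w̄_l′ + w_k′/w_k²)/(w̄_l − 1/w_k) ] = 0 and ā_k·[ r′/w̄_k − r·w̄_k′/w̄_k² + u′ + Σ_l a_l·(w_l′ + w̄_k′/w̄_k²)/(w_l − 1/w̄_k) ] = 0. (That is, the quantities I_k = a_k·z̄(1/w_k) and Ī_k = ā_k·z(1/w̄_k) are integrals of the string equation: dI_k/dx = dĪ_k/dx = 0.) -/

import Mathlib

open Finset Filter Topology

private lemma tends_lin (w₀ : ℂ) : Tendsto (fun w : ℂ => w - w₀) (𝓝 w₀) (𝓝 0) := by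
  have h : Tendsto (fun w : ℂ => w - w₀) (𝓝 w₀) (𝓝 (w₀ - w₀)) :=
    tendsto_id.sub tendsto_const_nhds
  rwa [sub_self] at h

private lemma res_unique {f : ℂ → ℂ} {w₀ L : ℂ}
    (h1 : Tendsto (fun w => (w - w₀) * f w) (𝓝[≠] w₀) (𝓝 L))
    (h2 : ∀ᶠ w in 𝓝[≠] w₀, f w = 1) : L = 0 := by
  have h0 : Tendsto (fun w : ℂ => (w - w₀) * f w) (𝓝[≠] w₀) (𝓝 0) := by
    have hb : Tendsto (fun w : ℂ => w - w₀) (𝓝[≠] w₀) (𝓝 0) :=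
      (tends_lin w₀).mono_left nhdsWithin_le_nhds
    exact hb.congr' (h2.mono fun w hw => by simp [hw])
  exact tendsto_nhds_unique h1 h0

private lemma tends_off {D : ℂ → ℂ} {w₀ d : ℂ} (c : ℂ)
    (hD : Tendsto D (𝓝 w₀) (𝓝 d)) (hd : d ≠ 0) :
    Tendsto (fun w => (w - w₀) * (c / D w)) (𝓝[≠] w₀) (𝓝 0) := by
  have hq : Tendsto (fun w => c / D w) (𝓝 w₀) (𝓝 (c / d)) :=
    (tendsto_const_nhds (x := c)).div hD hd
  have h2 : Tendsto (fun w => (w - w₀) * (c / D w)) (𝓝 w₀) (𝓝 (0 * (c / d))) :=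
    (tends_lin w₀).mul hq
  rw [zero_mul] at h2
  exact h2.mono_left nhdsWithin_le_nhds

private lemma tends_pole (c w₀ : ℂ) :
    Tendsto (fun w => (w - w₀) * (c / (w - w₀))) (𝓝[≠] w₀) (𝓝 c) := by
  apply Tendsto.congr' _ (tendsto_const_nhds (α := ℂ))
  filter_upwards [self_mem_nhdsWithin] with w hw
  have h : w - w₀ ≠ 0 := sub_ne_zero.2 hw
  field_simp

private lemma tends_pole' (c w₀ : ℂ) :
    Tendsto (fun w => (w - w₀) * (c / (w₀ - w))) (𝓝[≠] w₀) (𝓝 (-c)) := by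
  apply Tendsto.congr' _ (tendsto_const_nhds (α := ℂ))
  filter_upwards [self_mem_nhdsWithin] with w hw
  have h : w₀ - w ≠ 0 := sub_ne_zero.2 (Ne.symm hw)
  field_simp
  ring

private lemma split_div (e c d q B : ℂ) (hq : q ≠ 0) (hB : B ≠ 0) :
    e * (c + d / q) / B = e * c / B + d * (e / (q * B)) := by
  field_simp

private lemma split_div2 (e c d B : ℂ) (hB : B ≠ 0) :
    e * (c + d) / B = e * c / B - d * (e / -B) := by
  rw [div_neg, mul_neg, sub_neg_eq_add]
  field_simp


/-- under the string equation, the quantities `I_k = a_k·z̄(1/w_k)`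
and `Ī_k = ā_k·z(1/w̄_k)` are integrals of motion: their `x`-derivatives, written
explicitly below, vanish for every `x` and every `k ∈ {1,…,n+1}`. -/
theorem Ik_integral_of_string_equation
    (n : ℕ) (a abar : ℕ → ℂ)
    (r u ubar : ℝ → ℂ) (W Wb : ℕ → ℝ → ℂ)
    (r' u' ubar' : ℝ → ℂ) (W' Wb' : ℕ → ℝ → ℂ)
    (ha : ∀ i ∈ Finset.Icc 1 (n + 1), a i ≠ 0)
    (habar : ∀ i ∈ Finset.Icc 1 (n + 1), abar i ≠ 0)
    (hasum : ∑ i ∈ Finset.Icc 1 (n + 1), a i = 0)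
    (habarsum : ∑ i ∈ Finset.Icc 1 (n + 1), abar i = 0)
    (hr0 : ∀ x, r x ≠ 0)
    (hW0 : ∀ i ∈ Finset.Icc 1 (n + 1), ∀ x : ℝ, W i x ≠ 0)
    (hWb0 : ∀ i ∈ Finset.Icc 1 (n + 1), ∀ x : ℝ, Wb i x ≠ 0)
    (hWdist : ∀ i ∈ Finset.Icc 1 (n + 1), ∀ j ∈ Finset.Icc 1 (n + 1), i ≠ j →
      ∀ x : ℝ, W i x ≠ W j x)
    (hWbdist : ∀ i ∈ Finset.Icc 1 (n + 1), ∀ j ∈ Finset.Icc 1 (n + 1), i ≠ j →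
      ∀ x : ℝ, Wb i x ≠ Wb j x)
    (hWWb : ∀ i ∈ Finset.Icc 1 (n + 1), ∀ j ∈ Finset.Icc 1 (n + 1),
      ∀ x : ℝ, W i x * Wb j x ≠ 1)
    (hdr : ∀ x, HasDerivAt r (r' x) x)
    (hdu : ∀ x, HasDerivAt u (u' x) x)
    (hdubar : ∀ x, HasDerivAt ubar (ubar' x) x)
    (hdW : ∀ i ∈ Finset.Icc 1 (n + 1), ∀ x, HasDerivAt (W i) (W' i x) x)
    (hdWb : ∀ i ∈ Finset.Icc 1 (n + 1), ∀ x, HasDerivAt (Wb i) (Wb' i x) x)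
    -- the rational (in w) partial derivatives of z and z̄
    (Zw Zx Zbw Zbx : ℝ → ℂ → ℂ)
    (hZw : ∀ x w, Zw x w = r x + ∑ i ∈ Finset.Icc 1 (n + 1), a i / (w - W i x))
    (hZx : ∀ x w, Zx x w =
      r' x * w + u' x + ∑ i ∈ Finset.Icc 1 (n + 1), a i * W' i x / (W i x - w))
    (hZbw : ∀ x w, Zbw x w =
      - r x / w ^ 2 + ∑ i ∈ Finset.Icc 1 (n + 1), abar i / (w ^ 2 * (Wb i x - 1 / w)))
    (hZbx : ∀ x w, Zbx x w =
      r' x / w + ubar' x + ∑ i ∈ Finset.Icc 1 (n + 1), abar i * Wb' i x / (Wb i x - 1 / w))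
    -- the string equation
    (hstring : ∀ (x : ℝ) (w : ℂ), w ≠ 0 → (∀ j ∈ Finset.Icc 1 (n + 1), w ≠ W j x) →
      (∀ j ∈ Finset.Icc 1 (n + 1), w ≠ (Wb j x)⁻¹) →
      w * Zw x w * Zbx x w - w * Zx x w * Zbw x w = 1) :
    ∀ x : ℝ, ∀ k ∈ Finset.Icc 1 (n + 1),
      a k * (r' x / W k x - r x * W' k x / (W k x) ^ 2 + ubar' x
        + ∑ l ∈ Finset.Icc 1 (n + 1),
            abar l * (Wb' l x + W' k x / (W k x) ^ 2) / (Wb l x - 1 / W k x)) = 0 ∧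
      abar k * (r' x / Wb k x - r x * Wb' k x / (Wb k x) ^ 2 + u' x
        + ∑ l ∈ Finset.Icc 1 (n + 1),
            a l * (W' l x + Wb' k x / (Wb k x) ^ 2) / (W l x - 1 / Wb k x)) = 0 := by
  intro x k hk
  constructor
  · -- first integral: pole at w = W k x
    set w₀ : ℂ := W k x with hw0def
    have hw₀ : w₀ ≠ 0 := hW0 k hk x
    have hden1 : ∀ l ∈ Finset.Icc 1 (n + 1), Wb l x - 1 / w₀ ≠ 0 := by
      intro l hl h
      rw [sub_eq_zero] at h
      refine hWWb k hk l hl x ?_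
      rw [h, ← hw0def]
      field_simp
    have hWne : ∀ i ∈ Finset.Icc 1 (n + 1), i ≠ k → w₀ - W i x ≠ 0 := by
      intro i hi hik
      exact sub_ne_zero.2 (hWdist k hk i hi (fun h => hik h.symm) x)
    have hevne : ∀ᶠ w in 𝓝[≠] w₀, w ≠ w₀ := by
      filter_upwards [self_mem_nhdsWithin] with w hw using hw
    have hev0 : ∀ᶠ w in 𝓝[≠] w₀, w ≠ 0 :=
      (eventually_ne_nhds hw₀).filter_mono nhdsWithin_le_nhds
    have hevW : ∀ᶠ w in 𝓝[≠] w₀, ∀ j ∈ Finset.Icc 1 (n + 1), w ≠ W j x := by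
      rw [eventually_all_finset]
      intro j hj
      by_cases hjk : j = k
      · subst hjk; exact hevne
      · have hne : w₀ ≠ W j x := sub_ne_zero.1 (hWne j hj hjk)
        exact (eventually_ne_nhds hne).filter_mono nhdsWithin_le_nhds
    have hevWb : ∀ᶠ w in 𝓝[≠] w₀, ∀ j ∈ Finset.Icc 1 (n + 1), w ≠ (Wb j x)⁻¹ := by
      rw [eventually_all_finset]
      intro j hj
      have hne : w₀ ≠ (Wb j x)⁻¹ := by
        intro h
        exact hden1 j hj (by rw [h, one_div, inv_inv, sub_self])
      exact (eventually_ne_nhds hne).filter_mono nhdsWithin_le_nhds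
    have hevstr : ∀ᶠ w in 𝓝[≠] w₀,
        w * Zw x w * Zbx x w - w * Zx x w * Zbw x w = 1 := by
      filter_upwards [hev0, hevW, hevWb] with w h1 h2 h3 using hstring x w h1 h2 h3
    -- limit of (w - w₀) * Zw
    have hA : Tendsto (fun w => (w - w₀) * Zw x w) (𝓝[≠] w₀) (𝓝 (a k)) := by
      have hsum : Tendsto
          (fun w => ∑ i ∈ Finset.Icc 1 (n + 1), (w - w₀) * (a i / (w - W i x)))
          (𝓝[≠] w₀) (𝓝 (∑ i ∈ Finset.Icc 1 (n + 1), if i = k then a k else 0)) := by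
        apply tendsto_finset_sum
        intro i hi
        by_cases hik : i = k
        · subst hik
          simp only [if_pos rfl, ← hw0def]
          exact tends_pole (a i) w₀
        · simp only [if_neg hik]
          exact tends_off (a i)
            (show Tendsto (fun w : ℂ => w - W i x) (𝓝 w₀) (𝓝 (w₀ - W i x)) from
              tendsto_id.sub tendsto_const_nhds) (hWne i hi hik)
      have hconst : Tendsto (fun w => (w - w₀) * r x) (𝓝[≠] w₀) (𝓝 0) := by
        have h := (tends_lin w₀).mul (tendsto_const_nhds (x := r x))
        rw [zero_mul] at h
        exact h.mono_left nhdsWithin_le_nhds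
      have hcomb := hconst.add hsum
      have hval : (0 : ℂ) + ∑ i ∈ Finset.Icc 1 (n + 1), (if i = k then a k else 0) = a k := by
        simp [Finset.sum_ite_eq', hk]
      rw [hval] at hcomb
      apply hcomb.congr
      intro w
      rw [hZw]
      simp only [mul_add, Finset.mul_sum]
    -- limit of (w - w₀) * Zx
    have hB : Tendsto (fun w => (w - w₀) * Zx x w) (𝓝[≠] w₀) (𝓝 (-(a k * W' k x))) := by
      have hsum : Tendsto
          (fun w => ∑ i ∈ Finset.Icc 1 (n + 1), (w - w₀) * (a i * W' i x / (W i x - w)))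
          (𝓝[≠] w₀)
          (𝓝 (∑ i ∈ Finset.Icc 1 (n + 1), if i = k then -(a k * W' k x) else 0)) := by
        apply tendsto_finset_sum
        intro i hi
        by_cases hik : i = k
        · subst hik
          simp only [if_pos rfl, ← hw0def]
          exact tends_pole' (a i * W' i x) w₀
        · simp only [if_neg hik]
          have hd : W i x - w₀ ≠ 0 := by
            intro h
            exact hWne i hi hik (by linear_combination -h)
          exact tends_off (a i * W' i x)
            (show Tendsto (fun w : ℂ => W i x - w) (𝓝 w₀) (𝓝 (W i x - w₀)) from
              tendsto_const_nhds.sub tendsto_id) hd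
      have hconst : Tendsto (fun w => (w - w₀) * (r' x * w + u' x)) (𝓝[≠] w₀) (𝓝 0) := by
        have h := (tends_lin w₀).mul
          (show Tendsto (fun w : ℂ => r' x * w + u' x) (𝓝 w₀) (𝓝 (r' x * w₀ + u' x)) from
            (tendsto_const_nhds.mul tendsto_id).add tendsto_const_nhds)
        rw [zero_mul] at h
        exact h.mono_left nhdsWithin_le_nhds
      have hcomb := hconst.add hsum
      have hval : (0 : ℂ) + ∑ i ∈ Finset.Icc 1 (n + 1),
          (if i = k then -(a k * W' k x) else 0) = -(a k * W' k x) := by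
        simp [Finset.sum_ite_eq', hk]
      rw [hval] at hcomb
      apply hcomb.congr
      intro w
      rw [hZx]
      simp only [mul_add, Finset.mul_sum]
    -- continuity of w * Zbx and w * Zbw at w₀
    have hC : Tendsto (fun w => w * Zbx x w) (𝓝[≠] w₀) (𝓝 (w₀ * Zbx x w₀)) := by
      have hbase : Tendsto
          (fun w : ℂ => w * (r' x / w + ubar' x +
            ∑ i ∈ Finset.Icc 1 (n + 1), abar i * Wb' i x / (Wb i x - 1 / w)))
          (𝓝 w₀)
          (𝓝 (w₀ * (r' x / w₀ + ubar' x +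
            ∑ i ∈ Finset.Icc 1 (n + 1), abar i * Wb' i x / (Wb i x - 1 / w₀)))) := by
        refine tendsto_id.mul (Tendsto.add (Tendsto.add ?_ tendsto_const_nhds) ?_)
        · exact tendsto_const_nhds.div tendsto_id hw₀
        · exact tendsto_finset_sum _ fun i hi =>
            tendsto_const_nhds.div
              (tendsto_const_nhds.sub (tendsto_const_nhds.div tendsto_id hw₀))
              (hden1 i hi)
      simp only [← hZbx] at hbase
      exact hbase.mono_left nhdsWithin_le_nhds
    have hD : Tendsto (fun w => w * Zbw x w) (𝓝[≠] w₀) (𝓝 (w₀ * Zbw x w₀)) := by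
      have hbase : Tendsto
          (fun w : ℂ => w * (- r x / w ^ 2 +
            ∑ i ∈ Finset.Icc 1 (n + 1), abar i / (w ^ 2 * (Wb i x - 1 / w))))
          (𝓝 w₀)
          (𝓝 (w₀ * (- r x / w₀ ^ 2 +
            ∑ i ∈ Finset.Icc 1 (n + 1), abar i / (w₀ ^ 2 * (Wb i x - 1 / w₀))))) := by
        refine tendsto_id.mul (Tendsto.add ?_ ?_)
        · exact tendsto_const_nhds.div (tendsto_id.pow 2) (pow_ne_zero 2 hw₀)
        · exact tendsto_finset_sum _ fun i hi =>
            tendsto_const_nhds.div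
              ((tendsto_id.pow 2).mul
                (tendsto_const_nhds.sub (tendsto_const_nhds.div tendsto_id hw₀)))
              (mul_ne_zero (pow_ne_zero 2 hw₀) (hden1 i hi))
      simp only [← hZbw] at hbase
      exact hbase.mono_left nhdsWithin_le_nhds
    have hmain : Tendsto
        (fun w => (w - w₀) * (w * Zw x w * Zbx x w - w * Zx x w * Zbw x w))
        (𝓝[≠] w₀)
        (𝓝 (a k * (w₀ * Zbx x w₀) - -(a k * W' k x) * (w₀ * Zbw x w₀))) := by
      have h := (hA.mul hC).sub (hB.mul hD)
      apply h.congr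
      intro w
      ring
    have hL := res_unique hmain hevstr
    have hkey : a k * (Zbx x w₀ + W' k x * Zbw x w₀) = 0 := by
      have h2 : w₀ * (a k * (Zbx x w₀ + W' k x * Zbw x w₀)) = 0 := by
        linear_combination hL
      rcases mul_eq_zero.mp h2 with h | h
      · exact absurd h hw₀
      · exact h
    have hbr : r' x / w₀ - r x * W' k x / w₀ ^ 2 + ubar' x
        + ∑ l ∈ Finset.Icc 1 (n + 1),
            abar l * (Wb' l x + W' k x / w₀ ^ 2) / (Wb l x - 1 / w₀)
        = Zbx x w₀ + W' k x * Zbw x w₀ := by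
      rw [hZbx, hZbw]
      have hsum : ∑ l ∈ Finset.Icc 1 (n + 1),
          abar l * (Wb' l x + W' k x / w₀ ^ 2) / (Wb l x - 1 / w₀)
          = ∑ l ∈ Finset.Icc 1 (n + 1),
            (abar l * Wb' l x / (Wb l x - 1 / w₀)
              + W' k x * (abar l / (w₀ ^ 2 * (Wb l x - 1 / w₀)))) := by
        refine Finset.sum_congr rfl fun l hl => ?_
        exact split_div (abar l) (Wb' l x) (W' k x) (w₀ ^ 2) (Wb l x - 1 / w₀)
          (pow_ne_zero 2 hw₀) (hden1 l hl)
      rw [hsum, Finset.sum_add_distrib, ← Finset.mul_sum]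
      ring
    rw [hbr]
    exact hkey
  · -- second integral: pole at w = (Wb k x)⁻¹
    set v₀ : ℂ := (Wb k x)⁻¹ with hv0def
    have hWbk : Wb k x ≠ 0 := hWb0 k hk x
    have hv₀ : v₀ ≠ 0 := inv_ne_zero hWbk
    have hWnev : ∀ i ∈ Finset.Icc 1 (n + 1), W i x - v₀ ≠ 0 := by
      intro i hi h
      rw [sub_eq_zero] at h
      refine hWWb i hi k hk x ?_
      rw [h, hv0def]
      exact inv_mul_cancel₀ hWbk
    have hdenv : ∀ l ∈ Finset.Icc 1 (n + 1), l ≠ k → Wb l x - 1 / v₀ ≠ 0 := by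
      intro l hl hlk h
      rw [hv0def, one_div, inv_inv, sub_eq_zero] at h
      exact hWbdist l hl k hk hlk x h
    have hevne : ∀ᶠ w in 𝓝[≠] v₀, w ≠ v₀ := by
      filter_upwards [self_mem_nhdsWithin] with w hw using hw
    have hev0 : ∀ᶠ w in 𝓝[≠] v₀, w ≠ 0 :=
      (eventually_ne_nhds hv₀).filter_mono nhdsWithin_le_nhds
    have hevW : ∀ᶠ w in 𝓝[≠] v₀, ∀ j ∈ Finset.Icc 1 (n + 1), w ≠ W j x := by
      rw [eventually_all_finset]
      intro j hj
      have hne : v₀ ≠ W j x := by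
        intro h
        exact hWnev j hj (by rw [← h, sub_self])
      exact (eventually_ne_nhds hne).filter_mono nhdsWithin_le_nhds
    have hevWb : ∀ᶠ w in 𝓝[≠] v₀, ∀ j ∈ Finset.Icc 1 (n + 1), w ≠ (Wb j x)⁻¹ := by
      rw [eventually_all_finset]
      intro j hj
      by_cases hjk : j = k
      · subst hjk; exact hevne
      · have hne : v₀ ≠ (Wb j x)⁻¹ := by
          intro h
          rw [hv0def] at h
          exact hWbdist j hj k hk hjk x (inv_injective h.symm)
        exact (eventually_ne_nhds hne).filter_mono nhdsWithin_le_nhds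
    have hevstr : ∀ᶠ w in 𝓝[≠] v₀,
        w * Zw x w * Zbx x w - w * Zx x w * Zbw x w = 1 := by
      filter_upwards [hev0, hevW, hevWb] with w h1 h2 h3 using hstring x w h1 h2 h3
    -- continuity of w * Zw and w * Zx at v₀
    have hA : Tendsto (fun w => w * Zw x w) (𝓝[≠] v₀) (𝓝 (v₀ * Zw x v₀)) := by
      have hbase : Tendsto
          (fun w : ℂ => w * (r x + ∑ i ∈ Finset.Icc 1 (n + 1), a i / (w - W i x)))
          (𝓝 v₀)
          (𝓝 (v₀ * (r x + ∑ i ∈ Finset.Icc 1 (n + 1), a i / (v₀ - W i x)))) := by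
        refine tendsto_id.mul (Tendsto.add tendsto_const_nhds ?_)
        refine tendsto_finset_sum _ fun i hi => tendsto_const_nhds.div
          (tendsto_id.sub tendsto_const_nhds) ?_
        intro h
        exact hWnev i hi (by linear_combination -h)
      simp only [← hZw] at hbase
      exact hbase.mono_left nhdsWithin_le_nhds
    have hB : Tendsto (fun w => w * Zx x w) (𝓝[≠] v₀) (𝓝 (v₀ * Zx x v₀)) := by
      have hbase : Tendsto
          (fun w : ℂ => w * (r' x * w + u' x +
            ∑ i ∈ Finset.Icc 1 (n + 1), a i * W' i x / (W i x - w)))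
          (𝓝 v₀)
          (𝓝 (v₀ * (r' x * v₀ + u' x +
            ∑ i ∈ Finset.Icc 1 (n + 1), a i * W' i x / (W i x - v₀)))) := by
        refine tendsto_id.mul (Tendsto.add
          ((tendsto_const_nhds.mul tendsto_id).add tendsto_const_nhds) ?_)
        exact tendsto_finset_sum _ fun i hi => tendsto_const_nhds.div
          (tendsto_const_nhds.sub tendsto_id) (hWnev i hi)
      simp only [← hZx] at hbase
      exact hbase.mono_left nhdsWithin_le_nhds
    -- limit of (w - v₀) * Zbx
    have hC : Tendsto (fun w => (w - v₀) * Zbx x w) (𝓝[≠] v₀)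
        (𝓝 (abar k * Wb' k x * v₀ / Wb k x)) := by
      have hsum : Tendsto
          (fun w => ∑ i ∈ Finset.Icc 1 (n + 1), (w - v₀) * (abar i * Wb' i x / (Wb i x - 1 / w)))
          (𝓝[≠] v₀)
          (𝓝 (∑ i ∈ Finset.Icc 1 (n + 1),
            if i = k then abar k * Wb' k x * v₀ / Wb k x else 0)) := by
        apply tendsto_finset_sum
        intro i hi
        by_cases hik : i = k
        · subst hik
          simp only [if_pos rfl]
          have hbase : Tendsto (fun w : ℂ => abar i * Wb' i x * w / Wb i x) (𝓝 v₀)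
              (𝓝 (abar i * Wb' i x * v₀ / Wb i x)) :=
            (tendsto_const_nhds.mul tendsto_id).div tendsto_const_nhds hWbk
          apply (hbase.mono_left nhdsWithin_le_nhds).congr'
          filter_upwards [hev0, hevne] with w hw0 hwv
          have hden : Wb i x - 1 / w ≠ 0 := by
            intro h
            apply hwv
            rw [sub_eq_zero] at h
            rw [hv0def, h, one_div, inv_inv]
          have h2 : w * Wb i x - 1 ≠ 0 := by
            intro hc
            apply hden
            field_simp
            linear_combination hc
          rw [hv0def, show Wb i x - 1 / w = (w * Wb i x - 1) / w from by
              rw [sub_div, mul_div_cancel_left₀ _ hw0], div_div_eq_mul_div,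
            ← mul_div_assoc, div_eq_div_iff hWbk h2]
          linear_combination (abar i * Wb' i x * w) * inv_mul_cancel₀ hWbk
        · simp only [if_neg hik]
          exact tends_off (abar i * Wb' i x)
            (show Tendsto (fun w : ℂ => Wb i x - 1 / w) (𝓝 v₀) (𝓝 (Wb i x - 1 / v₀)) from
              tendsto_const_nhds.sub (tendsto_const_nhds.div tendsto_id hv₀))
            (hdenv i hi hik)
      have hconst : Tendsto (fun w => (w - v₀) * (r' x / w + ubar' x)) (𝓝[≠] v₀) (𝓝 0) := by
        have h := (tends_lin v₀).mul
          (show Tendsto (fun w : ℂ => r' x / w + ubar' x) (𝓝 v₀) (𝓝 (r' x / v₀ + ubar' x)) from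
            (tendsto_const_nhds.div tendsto_id hv₀).add tendsto_const_nhds)
        rw [zero_mul] at h
        exact h.mono_left nhdsWithin_le_nhds
      have hcomb := hconst.add hsum
      have hval : (0 : ℂ) + ∑ i ∈ Finset.Icc 1 (n + 1),
          (if i = k then abar k * Wb' k x * v₀ / Wb k x else 0)
          = abar k * Wb' k x * v₀ / Wb k x := by
        simp [Finset.sum_ite_eq', hk]
      rw [hval] at hcomb
      apply hcomb.congr
      intro w
      rw [hZbx]
      simp only [mul_add, Finset.mul_sum]
    -- limit of (w - v₀) * Zbw
    have hD : Tendsto (fun w => (w - v₀) * Zbw x w) (𝓝[≠] v₀)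
        (𝓝 (abar k / (v₀ * Wb k x))) := by
      have hsum : Tendsto
          (fun w => ∑ i ∈ Finset.Icc 1 (n + 1), (w - v₀) * (abar i / (w ^ 2 * (Wb i x - 1 / w))))
          (𝓝[≠] v₀)
          (𝓝 (∑ i ∈ Finset.Icc 1 (n + 1), if i = k then abar k / (v₀ * Wb k x) else 0)) := by
        apply tendsto_finset_sum
        intro i hi
        by_cases hik : i = k
        · subst hik
          simp only [if_pos rfl]
          have hbase : Tendsto (fun w : ℂ => abar i / (w * Wb i x)) (𝓝 v₀)
              (𝓝 (abar i / (v₀ * Wb i x))) :=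
            tendsto_const_nhds.div (tendsto_id.mul tendsto_const_nhds)
              (mul_ne_zero hv₀ hWbk)
          apply (hbase.mono_left nhdsWithin_le_nhds).congr'
          filter_upwards [hev0, hevne] with w hw0 hwv
          have hden : Wb i x - 1 / w ≠ 0 := by
            intro h
            apply hwv
            rw [sub_eq_zero] at h
            rw [hv0def, h, one_div, inv_inv]
          have h2 : w * Wb i x - 1 ≠ 0 := by
            intro hc
            apply hden
            field_simp
            linear_combination hc
          rw [hv0def, show Wb i x - 1 / w = (w * Wb i x - 1) / w from by
              rw [sub_div, mul_div_cancel_left₀ _ hw0],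
            show w ^ 2 * ((w * Wb i x - 1) / w) = w * (w * Wb i x - 1) from by
              field_simp
              try ring,
            ← mul_div_assoc,
            div_eq_div_iff (mul_ne_zero hw0 hWbk) (mul_ne_zero hw0 h2)]
          linear_combination (abar i * w) * inv_mul_cancel₀ hWbk
        · simp only [if_neg hik]
          exact tends_off (abar i)
            (show Tendsto (fun w : ℂ => w ^ 2 * (Wb i x - 1 / w)) (𝓝 v₀)
                (𝓝 (v₀ ^ 2 * (Wb i x - 1 / v₀))) from
              (tendsto_id.pow 2).mul
                (tendsto_const_nhds.sub (tendsto_const_nhds.div tendsto_id hv₀)))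
            (mul_ne_zero (pow_ne_zero 2 hv₀) (hdenv i hi hik))
      have hconst : Tendsto (fun w => (w - v₀) * (- r x / w ^ 2)) (𝓝[≠] v₀) (𝓝 0) := by
        have h := (tends_lin v₀).mul
          (show Tendsto (fun w : ℂ => - r x / w ^ 2) (𝓝 v₀) (𝓝 (- r x / v₀ ^ 2)) from
            tendsto_const_nhds.div (tendsto_id.pow 2) (pow_ne_zero 2 hv₀))
        rw [zero_mul] at h
        exact h.mono_left nhdsWithin_le_nhds
      have hcomb := hconst.add hsum
      have hval : (0 : ℂ) + ∑ i ∈ Finset.Icc 1 (n + 1),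
          (if i = k then abar k / (v₀ * Wb k x) else 0) = abar k / (v₀ * Wb k x) := by
        simp [Finset.sum_ite_eq', hk]
      rw [hval] at hcomb
      apply hcomb.congr
      intro w
      rw [hZbw]
      simp only [mul_add, Finset.mul_sum]
    have hmain : Tendsto
        (fun w => (w - v₀) * (w * Zw x w * Zbx x w - w * Zx x w * Zbw x w))
        (𝓝[≠] v₀)
        (𝓝 (v₀ * Zw x v₀ * (abar k * Wb' k x * v₀ / Wb k x)
          - v₀ * Zx x v₀ * (abar k / (v₀ * Wb k x)))) := by
      have h := (hA.mul hC).sub (hB.mul hD)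
      apply h.congr
      intro w
      ring
    have hL := res_unique hmain hevstr
    have hkey : abar k * (Zx x v₀ - Wb' k x / Wb k x ^ 2 * Zw x v₀) = 0 := by
      rw [hv0def] at hL ⊢
      rw [show ((Wb k x)⁻¹ : ℂ) = 1 / Wb k x from (one_div _).symm] at hL ⊢
      field_simp at hL
      have e1 : Wb' k x / Wb k x ^ 2 * Wb k x ^ 3 = Wb' k x * Wb k x := by
        field_simp
      have h4 : Wb k x ^ 3 * (abar k * (Zx x (1 / Wb k x)
          - Wb' k x / Wb k x ^ 2 * Zw x (1 / Wb k x))) = 0 := by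
        linear_combination (-Wb k x) * hL - abar k * Zw x (1 / Wb k x) * e1
      rcases mul_eq_zero.mp h4 with h | h
      · exact absurd h (pow_ne_zero 3 hWbk)
      · exact h
    have hbr : r' x / Wb k x - r x * Wb' k x / Wb k x ^ 2 + u' x
        + ∑ l ∈ Finset.Icc 1 (n + 1),
            a l * (W' l x + Wb' k x / Wb k x ^ 2) / (W l x - 1 / Wb k x)
        = Zx x v₀ - Wb' k x / Wb k x ^ 2 * Zw x v₀ := by
      rw [hZx, hZw]
      have hsum : ∑ l ∈ Finset.Icc 1 (n + 1),
          a l * (W' l x + Wb' k x / Wb k x ^ 2) / (W l x - 1 / Wb k x)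
          = ∑ l ∈ Finset.Icc 1 (n + 1),
            (a l * W' l x / (W l x - v₀)
              - Wb' k x / Wb k x ^ 2 * (a l / (v₀ - W l x))) := by
        refine Finset.sum_congr rfl fun l hl => ?_
        have h1 : W l x - 1 / Wb k x = W l x - v₀ := by rw [hv0def, one_div]
        rw [h1, split_div2 (a l) (W' l x) (Wb' k x / Wb k x ^ 2) (W l x - v₀) (hWnev l hl),
          neg_sub]
      rw [hsum, Finset.sum_sub_distrib, ← Finset.mul_sum]
      have h2 : r' x / Wb k x = r' x * v₀ := by rw [hv0def]; field_simp
      have h3 : r x * Wb' k x / Wb k x ^ 2 = Wb' k x / Wb k x ^ 2 * r x := by ring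
      rw [h2, h3]
      ring
    rw [hbr]
    exact hkey
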